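/- (Invariance subspace property of the EnKF iteration.) Let G : ℝ^d → ℝ^N be any map, let C ∈ ℝ^{N×N}, let J ≥ 2, and let y_n^{(j)} ∈ ℝ^N for n ≥ 1, 1 ≤ j ≤ J be arbitrary data vectors. Given initial particles ξ_0^{(1)},…,ξ_0^{(J)} ∈ ℝ^d, define recursively: ω_n^{(j)} = G(ξ_n^{(j)}), ξ̄_n = (1/J)Σ_j ξ_n^{(j)}, ω̄_n = (1/J)Σ_j ω_n^{(j)}, Γ_n^{ξω} = (1/(J−1))Σ_j (ξ_n^{(j)} − ξ̄_n)(ω_n^{(j)} − ω̄_n)ᵀ, Γ_n^{ωω} = (1/(J−1))Σ_j (ω_n^{(j)} − ω̄_n)(ω_n^{(j)} − ω̄_n)ᵀ, and ξ_{n+1}^{(j)} = ξ_n^{(j)} + Γ_n^{ξω}(Γ_n^{ωω} + C)^{-1}(y_{n+1}^{(j)} − ω_n^{(j)}), where M^{-1} denotes the matrix inverse (any fixed total extension of the inverse, e.g. Mathlib's). Then for every n ≥ 0 and every j, the particle ξ_n^{(j)} lies in the linear span of {ξ_0^{(1)},…,ξ_0^{(J)}}; in particular the EnKF estimator ξ_n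 = (1/J)Σ_j ξ_n^{(j)} lies in this span. -/
import Mathlib


open Matrix BigOperators

lemma vecMulVec_mulVec_aux {d N : ℕ} (a : Fin d → ℝ) (b v : Fin N → ℝ) :
    (Matrix.vecMulVec a b).mulVec v = (b ⬝ᵥ v) • a := by
  funext i
  simp [Matrix.mulVec, Matrix.vecMulVec, dotProduct, Finset.mul_sum,
    mul_assoc, mul_comm, mul_left_comm]

/-- Invariance subspace property of the EnKF iteration: every particle generated by the
ensemble Kalman filter update
`ξ_{n+1}⁽ʲ⁾ = ξ_n⁽ʲ⁾ + Γ_n^{ξω}(Γ_n^{ωω} + C)⁻¹(y_{n+1}⁽ʲ⁾ − G(ξ_n⁽ʲ⁾))`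
lies in the linear span of the initial ensemble; in particular so does the EnKF estimator
`(1/J) Σⱼ ξ_n⁽ʲ⁾`. -/
theorem enkf_invariance_subspace_property
    (d N J : ℕ) (hJ : 2 ≤ J)
    (G : (Fin d → ℝ) → (Fin N → ℝ)) (C : Matrix (Fin N) (Fin N) ℝ)
    (y : ℕ → Fin J → (Fin N → ℝ))
    (ξ : ℕ → Fin J → (Fin d → ℝ))
    (hrec : ∀ n : ℕ, ∀ j : Fin J,
      ξ (n + 1) j = ξ n j +
        (((J : ℝ) - 1)⁻¹ •
            ∑ i, Matrix.vecMulVec (ξ n i - (J : ℝ)⁻¹ • ∑ l, ξ n l)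
              (G (ξ n i) - (J : ℝ)⁻¹ • ∑ l, G (ξ n l))).mulVec
          (((((J : ℝ) - 1)⁻¹ •
              ∑ i, Matrix.vecMulVec (G (ξ n i) - (J : ℝ)⁻¹ • ∑ l, G (ξ n l))
                (G (ξ n i) - (J : ℝ)⁻¹ • ∑ l, G (ξ n l))) + C)⁻¹.mulVec
            (y (n + 1) j - G (ξ n j)))) :
    (∀ n : ℕ, ∀ j : Fin J, ξ n j ∈ Submodule.span ℝ (Set.range (ξ 0))) ∧
    (∀ n : ℕ, (J : ℝ)⁻¹ • ∑ j, ξ n j ∈ Submodule.span ℝ (Set.range (ξ 0))) := by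
  set S := Submodule.span ℝ (Set.range (ξ 0)) with hS
  have main : ∀ n : ℕ, ∀ j : Fin J, ξ n j ∈ S := by
    intro n
    induction n with
    | zero => intro j; exact Submodule.subset_span ⟨j, rfl⟩
    | succ n ih =>
      intro j
      rw [hrec n j]
      refine S.add_mem (ih j) ?_
      set v := ((((J : ℝ) - 1)⁻¹ •
              ∑ i, Matrix.vecMulVec (G (ξ n i) - (J : ℝ)⁻¹ • ∑ l, G (ξ n l))
                (G (ξ n i) - (J : ℝ)⁻¹ • ∑ l, G (ξ n l))) + C)⁻¹.mulVec
            (y (n + 1) j - G (ξ n j)) with hv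
      rw [Matrix.smul_mulVec]
      refine S.smul_mem _ ?_
      have hsum : (∑ i, Matrix.vecMulVec (ξ n i - (J : ℝ)⁻¹ • ∑ l, ξ n l)
              (G (ξ n i) - (J : ℝ)⁻¹ • ∑ l, G (ξ n l))).mulVec v =
          ∑ i, ((G (ξ n i) - (J : ℝ)⁻¹ • ∑ l, G (ξ n l)) ⬝ᵥ v) •
            (ξ n i - (J : ℝ)⁻¹ • ∑ l, ξ n l) := by
        funext k
        simp only [Matrix.mulVec, dotProduct, Finset.sum_apply,
          Matrix.vecMulVec_apply, Finset.sum_mul, Pi.smul_apply, smul_eq_mul]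
        simp only [Matrix.sum_apply, Finset.mul_sum, Finset.sum_mul]
        rw [Finset.sum_comm]
        refine Finset.sum_congr rfl fun i _ => Finset.sum_congr rfl fun x _ => by rw [Matrix.vecMulVec_apply]; ring
      rw [hsum]
      refine Submodule.sum_mem S fun i _ => S.smul_mem _ ?_
      refine S.sub_mem (ih i) (S.smul_mem _ (Submodule.sum_mem S fun l _ => ih l))
  exact ⟨main, fun n => S.smul_mem _ (Submodule.sum_mem S fun j _ => main n j)⟩
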